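/- For p×p real matrices, if A, B are symmetric and Δ = A - B, then |tr(Δ(B - C))| ≤ (max_{i≠j} |B_ij - C_ij|)·‖Δ^-‖_1 + √p·(max_i |B_ii - C_ii|)·‖Δ^+‖_F, where Δ^- is Δ with the diagonal set to zero and Δ^+ is the diagonal part of Δ. -/

import Mathlib

open Matrix Finset

/-- If `Δ = A - B` with `A, B` symmetric, then
`|tr(Δ(B-C))| ≤ (max_{i≠j}|B_ij - C_ij|)·‖Δ⁻‖₁ + √p·(max_i |B_ii - C_ii|)·‖Δ⁺‖_F`,
stated with `a` (resp. `b`) an upper bound on the off-diagonal (resp. diagonal)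
entrywise differences, as in the maxima. -/
theorem trace_cross_term_bound (p : ℕ)
    (A B C : Matrix (Fin p) (Fin p) ℝ)
    (hA : A.IsSymm) (hB : B.IsSymm) (hC : C.IsSymm)
    (a b : ℝ)
    (ha : ∀ i j, i ≠ j → |B i j - C i j| ≤ a)
    (hb : ∀ i, |B i i - C i i| ≤ b) :
    |((A - B) * (B - C)).trace|
      ≤ a * (∑ i, ∑ j, if i ≠ j then |(A - B) i j| else 0)
        + Real.sqrt p * b * Real.sqrt (∑ i, ((A - B) i i) ^ 2) := by
  rcases Nat.eq_zero_or_pos p with hp | hp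
  · subst hp
    simp [Matrix.trace]
  have hb0 : 0 ≤ b := le_trans (abs_nonneg _) (hb ⟨0, hp⟩)
  set Δ := A - B with hΔ
  set D := B - C with hD
  have htr : (Δ * D).trace = ∑ i, ∑ j, Δ i j * D j i := by
    simp [Matrix.trace, Matrix.diag, Matrix.mul_apply]
  rw [htr]
  have key : ∀ i j : Fin p, |Δ i j * D j i|
      ≤ a * (if i ≠ j then |Δ i j| else 0) + (if i = j then b * |Δ i i| else 0) := by
    intro i j
    by_cases h : i = j
    · subst h
      simp only [ne_eq, not_true_eq_false, if_false, if_true, mul_zero, zero_add]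
      rw [abs_mul, mul_comm]
      exact mul_le_mul_of_nonneg_right (hb i) (abs_nonneg _)
    · simp only [ne_eq, h, not_false_eq_true, if_true, if_false, add_zero]
      rw [abs_mul, mul_comm]
      exact mul_le_mul_of_nonneg_right (ha j i (fun hji => h hji.symm)) (abs_nonneg _)
  have step1 : |∑ i, ∑ j, Δ i j * D j i|
      ≤ ∑ i, ∑ j, (a * (if i ≠ j then |Δ i j| else 0)
          + (if i = j then b * |Δ i i| else 0)) := by
    refine (Finset.abs_sum_le_sum_abs _ _).trans ?_
    refine Finset.sum_le_sum fun i _ => ?_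
    refine (Finset.abs_sum_le_sum_abs _ _).trans ?_
    exact Finset.sum_le_sum fun j _ => key i j
  refine step1.trans ?_
  have hsplit : ∑ i, ∑ j, (a * (if i ≠ j then |Δ i j| else 0)
        + (if i = j then b * |Δ i i| else 0))
      = a * (∑ i, ∑ j, if i ≠ j then |Δ i j| else 0) + b * ∑ i, |Δ i i| := by
    rw [Finset.mul_sum, Finset.mul_sum, ← Finset.sum_add_distrib]
    refine Finset.sum_congr rfl fun i _ => ?_
    rw [Finset.sum_add_distrib, Finset.mul_sum]
    congr 1
    simp
  rw [hsplit]
  refine add_le_add le_rfl ?_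
  rw [mul_comm (Real.sqrt p) b, mul_assoc]
  refine mul_le_mul_of_nonneg_left ?_ hb0
  have h1 : (∑ i, |Δ i i|) ^ 2 ≤ (p : ℝ) * ∑ i, |Δ i i| ^ 2 := by
    simpa using sq_sum_le_card_mul_sum_sq (s := (univ : Finset (Fin p))) (f := fun i => |Δ i i|)
  have h2 : ∑ i, |Δ i i| ^ 2 = ∑ i, (Δ i i) ^ 2 := by
    simp [sq_abs]
  calc ∑ i, |Δ i i| = Real.sqrt ((∑ i, |Δ i i|) ^ 2) := by
        rw [Real.sqrt_sq (Finset.sum_nonneg fun i _ => abs_nonneg _)]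
    _ ≤ Real.sqrt ((p : ℝ) * ∑ i, (Δ i i) ^ 2) := by
        apply Real.sqrt_le_sqrt; rw [← h2]; exact h1
    _ = Real.sqrt p * Real.sqrt (∑ i, (Δ i i) ^ 2) := by
        rw [Real.sqrt_mul (Nat.cast_nonneg p)]
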